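/- (Wedin's perturbation bound) Let A and B be real m×n matrices with rank(A) = rank(B). Then ‖A† − B†‖₂ ≤ 3 ‖A†‖₂ ‖B†‖₂ ‖A − B‖₂. -/

import Mathlib

open Matrix MeasureTheory ProbabilityTheory

noncomputable def specNorm {m n : ℕ} (A : Matrix (Fin m) (Fin n) ℝ) : ℝ :=
  ‖LinearMap.toContinuousLinearMap (Matrix.toEuclideanLin A)‖

noncomputable def frobNorm {m n : ℕ} (A : Matrix (Fin m) (Fin n) ℝ) : ℝ :=
  Real.sqrt (∑ i, ∑ j, (A i j) ^ 2)

/-- The column space (range) of a real matrix. -/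
def colSpace {m n : ℕ} (A : Matrix (Fin m) (Fin n) ℝ) : Submodule ℝ (Fin m → ℝ) :=
  LinearMap.range A.mulVecLin

/-- `G` is the Moore-Penrose pseudoinverse of `A`. -/
def IsMPInv {m n : ℕ} (A : Matrix (Fin m) (Fin n) ℝ) (G : Matrix (Fin n) (Fin m) ℝ) : Prop :=
  A * G * A = A ∧ G * A * G = G ∧ (A * G)ᵀ = A * G ∧ (G * A)ᵀ = G * A

section WedinAux

open scoped Matrix.Norms.L2Operator RealInnerProductSpace
open Module

lemma specNorm_eq_l2 {m n : ℕ} (A : Matrix (Fin m) (Fin n) ℝ) : specNorm A = ‖A‖ := rfl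

lemma real_transpose_eq_conjT {m n : ℕ} (A : Matrix (Fin m) (Fin n) ℝ) : Aᵀ = Aᴴ := by
  ext i j; simp [Matrix.conjTranspose_apply]

lemma norm_transpose_l2 {m n : ℕ} (A : Matrix (Fin m) (Fin n) ℝ) : ‖Aᵀ‖ = ‖A‖ := by
  rw [real_transpose_eq_conjT, Matrix.l2_opNorm_conjTranspose]

lemma sq_le_imp_le {a b : ℝ} (ha : 0 ≤ a) (hb : 0 ≤ b) (h : a ^ 2 ≤ b ^ 2) : a ≤ b := by
  nlinarith

lemma proj_norm_le_one {k : ℕ} {R : Matrix (Fin k) (Fin k) ℝ}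
    (h1 : Rᵀ = R) (h2 : R * R = R) : ‖R‖ ≤ 1 := by
  have hc : ‖Rᴴ * R‖ = ‖R‖ * ‖R‖ := Matrix.l2_opNorm_conjTranspose_mul_self R
  rw [← real_transpose_eq_conjT, h1, h2] at hc
  have h3 : (0:ℝ) ≤ ‖R‖ := norm_nonneg R
  nlinarith

lemma one_sub_sym {k : ℕ} {Q : Matrix (Fin k) (Fin k) ℝ} (h : Qᵀ = Q) :
    (1 - Q)ᵀ = 1 - Q := by
  rw [Matrix.transpose_sub, Matrix.transpose_one, h]

lemma one_sub_idem {k : ℕ} {Q : Matrix (Fin k) (Fin k) ℝ} (h : Q * Q = Q) :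
    (1 - Q) * (1 - Q) = 1 - Q := by
  simp [Matrix.mul_sub, Matrix.sub_mul, h]

/-- Rank equals dimension of the range of the associated Euclidean linear map. -/
lemma rank_eq_finrank_range_euclidean {k : ℕ} (P : Matrix (Fin k) (Fin k) ℝ) :
    P.rank = finrank ℝ (LinearMap.range (Matrix.toEuclideanLin (𝕜 := ℝ) P)) := by
  rw [Matrix.toEuclideanLin_eq_toLin]
  exact Matrix.rank_eq_finrank_range_toLin P (PiLp.basisFun 2 ℝ (Fin k))
    (PiLp.basisFun 2 ℝ (Fin k))

/-- The continuous linear map associated to a matrix. -/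
noncomputable def clmOf {m n : ℕ} (M : Matrix (Fin m) (Fin n) ℝ) :
    EuclideanSpace ℝ (Fin n) →L[ℝ] EuclideanSpace ℝ (Fin m) :=
  LinearMap.toContinuousLinearMap (Matrix.toEuclideanLin (𝕜 := ℝ) M)

lemma norm_clmOf {m n : ℕ} (M : Matrix (Fin m) (Fin n) ℝ) : ‖M‖ = ‖clmOf M‖ := rfl

lemma clmOf_apply {m n : ℕ} (M : Matrix (Fin m) (Fin n) ℝ) (x : EuclideanSpace ℝ (Fin n)) :
    clmOf M x = Matrix.toEuclideanLin (𝕜 := ℝ) M x := rfl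

lemma lin_apply_le {m n : ℕ} (M : Matrix (Fin m) (Fin n) ℝ) (x : EuclideanSpace ℝ (Fin n)) :
    ‖Matrix.toEuclideanLin (𝕜 := ℝ) M x‖ ≤ ‖M‖ * ‖x‖ := by
  rw [norm_clmOf, ← clmOf_apply]
  exact (clmOf M).le_opNorm x

lemma lin_mul_apply {k l p : ℕ} (M : Matrix (Fin k) (Fin l) ℝ) (N : Matrix (Fin l) (Fin p) ℝ)
    (x : EuclideanSpace ℝ (Fin p)) :
    Matrix.toEuclideanLin (𝕜 := ℝ) (M * N) x
      = Matrix.toEuclideanLin (𝕜 := ℝ) M (Matrix.toEuclideanLin (𝕜 := ℝ) N x) := by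
  show (WithLp.equiv 2 (Fin k → ℝ)).symm ((M * N).mulVec x)
    = (WithLp.equiv 2 (Fin k → ℝ)).symm (M.mulVec (N.mulVec x))
  rw [← Matrix.mulVec_mulVec]

lemma lin_one_apply {k : ℕ} (x : EuclideanSpace ℝ (Fin k)) :
    Matrix.toEuclideanLin (𝕜 := ℝ) (1 : Matrix (Fin k) (Fin k) ℝ) x = x := by
  show (WithLp.equiv 2 (Fin k → ℝ)).symm ((1 : Matrix (Fin k) (Fin k) ℝ).mulVec x) = x
  rw [Matrix.one_mulVec]
  rfl

lemma inner_eq_sum {k : ℕ} (u v : EuclideanSpace ℝ (Fin k)) : ⟪u, v⟫ = ∑ i, u i * v i := by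
  simp [PiLp.inner_apply, RCLike.inner_apply, conj_trivial, mul_comm]

lemma lin_apply_coord {m n : ℕ} (M : Matrix (Fin m) (Fin n) ℝ) (x : EuclideanSpace ℝ (Fin n))
    (i : Fin m) : Matrix.toEuclideanLin (𝕜 := ℝ) M x i = ∑ j, M i j * x j := by
  show M.mulVec x i = _
  simp [Matrix.mulVec, dotProduct]

lemma g_symm {k : ℕ} {P : Matrix (Fin k) (Fin k) ℝ} (hP1 : Pᵀ = P)
    (x y : EuclideanSpace ℝ (Fin k)) :
    ⟪Matrix.toEuclideanLin (𝕜 := ℝ) P x, y⟫ = ⟪x, Matrix.toEuclideanLin (𝕜 := ℝ) P y⟫ := by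
  have hPe : ∀ i j, P i j = P j i := by
    intro i j
    have h := congrFun (congrFun hP1 i) j
    rw [Matrix.transpose_apply] at h
    exact h.symm
  rw [inner_eq_sum, inner_eq_sum]
  simp only [lin_apply_coord, Finset.sum_mul, Finset.mul_sum]
  rw [Finset.sum_comm]
  exact Finset.sum_congr rfl fun i _ => Finset.sum_congr rfl fun j _ => by rw [hPe]; ring

lemma g_idem {k : ℕ} {P : Matrix (Fin k) (Fin k) ℝ} (hP2 : P * P = P)
    (x : EuclideanSpace ℝ (Fin k)) :
    Matrix.toEuclideanLin (𝕜 := ℝ) P (Matrix.toEuclideanLin (𝕜 := ℝ) P x)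
      = Matrix.toEuclideanLin (𝕜 := ℝ) P x := by
  rw [← lin_mul_apply, hP2]

lemma g_pyth {k : ℕ} {P : Matrix (Fin k) (Fin k) ℝ} (hP1 : Pᵀ = P) (hP2 : P * P = P)
    (x : EuclideanSpace ℝ (Fin k)) :
    ‖x‖ ^ 2 = ‖Matrix.toEuclideanLin (𝕜 := ℝ) P x‖ ^ 2
      + ‖x - Matrix.toEuclideanLin (𝕜 := ℝ) P x‖ ^ 2 := by
  set T := Matrix.toEuclideanLin (𝕜 := ℝ) P with hT
  have h0 : ⟪T x, x - T x⟫ = 0 := by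
    rw [inner_sub_right]
    have h1 : ⟪T x, T x⟫ = ⟪x, T (T x)⟫ := g_symm hP1 x (T x)
    rw [h1, g_idem hP2, real_inner_comm x (T x)]
    ring
  have h2 : x = T x + (x - T x) := by abel
  calc ‖x‖ ^ 2 = ‖T x + (x - T x)‖ ^ 2 := by rw [← h2]
    _ = ‖T x‖ ^ 2 + 2 * ⟪T x, x - T x⟫ + ‖x - T x‖ ^ 2 := norm_add_sq_real _ _
    _ = ‖T x‖ ^ 2 + ‖x - T x‖ ^ 2 := by rw [h0]; ring

lemma fixed_of_mem_range {k : ℕ} {P : Matrix (Fin k) (Fin k) ℝ} (hP2 : P * P = P)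
    {x : EuclideanSpace ℝ (Fin k)}
    (hx : x ∈ LinearMap.range (Matrix.toEuclideanLin (𝕜 := ℝ) P)) :
    Matrix.toEuclideanLin (𝕜 := ℝ) P x = x := by
  obtain ⟨w, rfl⟩ := hx
  exact g_idem hP2 w

set_option maxHeartbeats 2000000 in
/-- Key lemma: for orthogonal projections of equal rank, `‖(1-P)Q‖ ≤ ‖(1-Q)P‖`. -/
lemma proj_swap {k : ℕ} {P Q : Matrix (Fin k) (Fin k) ℝ}
    (hP1 : Pᵀ = P) (hP2 : P * P = P) (hQ1 : Qᵀ = Q) (hQ2 : Q * Q = Q)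
    (hr : P.rank = Q.rank) : ‖(1 - P) * Q‖ ≤ ‖(1 - Q) * P‖ := by
  set s := ‖(1 - Q) * P‖ with hs
  have hs0 : 0 ≤ s := norm_nonneg _
  rcases le_or_gt 1 s with hcase | hcase
  · calc ‖(1 - P) * Q‖ ≤ ‖(1 - P)‖ * ‖Q‖ := Matrix.l2_opNorm_mul _ _
      _ ≤ 1 * 1 := mul_le_mul (proj_norm_le_one (one_sub_sym hP1) (one_sub_idem hP2))
          (proj_norm_le_one hQ1 hQ2) (norm_nonneg _) zero_le_one
      _ ≤ s := by linarith
  · -- s < 1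
    set T := Matrix.toEuclideanLin (𝕜 := ℝ) P with hT
    set S := Matrix.toEuclideanLin (𝕜 := ℝ) Q with hS
    have hc2 : (0:ℝ) < 1 - s ^ 2 := by nlinarith
    -- Step A : on the range of P, `S` hardly shrinks vectors
    have stepA : ∀ x : EuclideanSpace ℝ (Fin k), T x = x →
        (1 - s ^ 2) * ‖x‖ ^ 2 ≤ ‖S x‖ ^ 2 := by
      intro x hx
      have h1 : ‖Matrix.toEuclideanLin (𝕜 := ℝ) ((1 - Q) * P) x‖ ≤ s * ‖x‖ := lin_apply_le _ x
      have h2 : Matrix.toEuclideanLin (𝕜 := ℝ) ((1 - Q) * P) x = x - S x := by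
        rw [lin_mul_apply, ← hT, hx, map_sub, LinearMap.sub_apply, lin_one_apply, ← hS]
      rw [h2] at h1
      have h3 : ‖x - S x‖ ^ 2 ≤ (s * ‖x‖) ^ 2 := pow_le_pow_left₀ (norm_nonneg _) h1 2
      have h4 := g_pyth hQ1 hQ2 x
      rw [← hS] at h4
      nlinarith [norm_nonneg x]
    -- the restricted map from range P to range Q
    have hmapsto : ∀ x ∈ LinearMap.range (Matrix.toEuclideanLin (𝕜 := ℝ) P),
        Matrix.toEuclideanLin (𝕜 := ℝ) Q x ∈
          LinearMap.range (Matrix.toEuclideanLin (𝕜 := ℝ) Q) :=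
      fun x _ => LinearMap.mem_range_self _ x
    set St := (Matrix.toEuclideanLin (𝕜 := ℝ) Q).restrict hmapsto with hSt
    have hinj : Function.Injective St := by
      rw [injective_iff_map_eq_zero]
      intro z hz
      have hz1 : S z.1 = 0 := by
        have h5 := congrArg Subtype.val hz
        rw [LinearMap.restrict_apply] at h5
        exact h5
      have hfix : T z.1 = z.1 := fixed_of_mem_range hP2 z.2
      have h6 := stepA z.1 hfix
      rw [hz1] at h6
      simp only [norm_zero] at h6
      have h8 : ‖z.1‖ ^ 2 ≤ 0 := by nlinarith [sq_nonneg ‖z.1‖]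
      have h9 : ‖z.1‖ ^ 2 = 0 := le_antisymm h8 (sq_nonneg _)
      exact Subtype.ext (norm_eq_zero.mp (sq_eq_zero_iff.mp h9))
    have hdim : finrank ℝ (LinearMap.range (Matrix.toEuclideanLin (𝕜 := ℝ) P))
        = finrank ℝ (LinearMap.range (Matrix.toEuclideanLin (𝕜 := ℝ) Q)) := by
      rw [← rank_eq_finrank_range_euclidean, ← rank_eq_finrank_range_euclidean, hr]
    have hsurj : Function.Surjective St :=
      (LinearMap.injective_iff_surjective_of_finrank_eq_finrank hdim).mp hinj
    -- Step D : on the range of Q, `T` hardly shrinks vectors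
    have stepD : ∀ y : EuclideanSpace ℝ (Fin k), S y = y →
        (1 - s ^ 2) * ‖y‖ ^ 2 ≤ ‖T y‖ ^ 2 := by
      intro y hy
      have hymem : y ∈ LinearMap.range (Matrix.toEuclideanLin (𝕜 := ℝ) Q) := ⟨y, hy⟩
      obtain ⟨⟨x, hxmem⟩, hSx⟩ := hsurj ⟨y, hymem⟩
      have hSxy : S x = y := by
        have h5 := congrArg Subtype.val hSx
        rw [LinearMap.restrict_apply] at h5
        exact h5
      have hfix : T x = x := fixed_of_mem_range hP2 hxmem
      have hinner : ‖y‖ ^ 2 ≤ ‖x‖ * ‖T y‖ := by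
        calc ‖y‖ ^ 2 = ⟪y, y⟫ := (real_inner_self_eq_norm_sq y).symm
          _ = ⟪S x, y⟫ := by rw [hSxy]
          _ = ⟪x, S y⟫ := g_symm hQ1 x y
          _ = ⟪x, y⟫ := by rw [hy]
          _ = ⟪T x, y⟫ := by rw [hfix]
          _ = ⟪x, T y⟫ := g_symm hP1 x y
          _ ≤ ‖x‖ * ‖T y‖ := real_inner_le_norm x (T y)
      have hxbound : (1 - s ^ 2) * ‖x‖ ^ 2 ≤ ‖y‖ ^ 2 := by
        have h5 := stepA x hfix
        rwa [hSxy] at h5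
      rcases eq_or_lt_of_le (norm_nonneg y) with hb | hb
      · rw [← hb]
        nlinarith [sq_nonneg ‖T y‖]
      · nlinarith [norm_nonneg x, norm_nonneg (T y), mul_pos hb hb,
          mul_le_mul hinner hinner (by positivity) (by positivity),
          mul_le_mul_of_nonneg_right hxbound (sq_nonneg ‖T y‖)]
    -- Final bound
    rw [norm_clmOf]
    apply ContinuousLinearMap.opNorm_le_bound _ hs0
    intro v
    rw [clmOf_apply]
    have happ : Matrix.toEuclideanLin (𝕜 := ℝ) ((1 - P) * Q) v = S v - T (S v) := by
      rw [lin_mul_apply, map_sub, LinearMap.sub_apply, lin_one_apply, ← hT, ← hS]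
    rw [happ]
    have hSSv : S (S v) = S v := g_idem hQ2 v
    have hD := stepD (S v) hSSv
    have hpy := g_pyth hP1 hP2 (S v)
    rw [← hT] at hpy
    have hSv : ‖S v‖ ≤ ‖v‖ := by
      calc ‖S v‖ ≤ ‖Q‖ * ‖v‖ := lin_apply_le Q v
        _ ≤ 1 * ‖v‖ := mul_le_mul_of_nonneg_right (proj_norm_le_one hQ1 hQ2) (norm_nonneg v)
        _ = ‖v‖ := one_mul _
    have hsq : ‖S v - T (S v)‖ ^ 2 ≤ (s * ‖v‖) ^ 2 := by
      have h5 : ‖S v - T (S v)‖ ^ 2 ≤ s ^ 2 * ‖S v‖ ^ 2 := by nlinarith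
      have h6 : ‖S v‖ ^ 2 ≤ ‖v‖ ^ 2 := pow_le_pow_left₀ (norm_nonneg _) hSv 2
      nlinarith [sq_nonneg s]
    exact sq_le_imp_le (norm_nonneg _) (by positivity) hsq

end WedinAux

set_option maxHeartbeats 2000000 in
open scoped Matrix.Norms.L2Operator in
theorem stmt3 {m n : ℕ} (A B : Matrix (Fin m) (Fin n) ℝ)
    (Ad Bd : Matrix (Fin n) (Fin m) ℝ) (hA : IsMPInv A Ad) (hB : IsMPInv B Bd)
    (hrank : A.rank = B.rank) :
    specNorm (Ad - Bd) ≤ 3 * specNorm Ad * specNorm Bd * specNorm (A - B) := by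
  obtain ⟨hA1, hA2, hA3, hA4⟩ := hA
  obtain ⟨hB1, hB2, hB3, hB4⟩ := hB
  simp only [specNorm_eq_l2]
  -- rank facts
  have hrP : (A * Ad).rank = A.rank := by
    refine le_antisymm (Matrix.rank_mul_le_left A Ad) ?_
    calc A.rank = ((A * Ad) * A).rank := by rw [hA1]
      _ ≤ (A * Ad).rank := Matrix.rank_mul_le_left _ _
  have hrQ : (B * Bd).rank = B.rank := by
    refine le_antisymm (Matrix.rank_mul_le_left B Bd) ?_
    calc B.rank = ((B * Bd) * B).rank := by rw [hB1]
      _ ≤ (B * Bd).rank := Matrix.rank_mul_le_left _ _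
  have hrP' : (Ad * A).rank = A.rank := by
    refine le_antisymm (Matrix.rank_mul_le_right Ad A) ?_
    calc A.rank = (A * (Ad * A)).rank := by rw [← Matrix.mul_assoc, hA1]
      _ ≤ (Ad * A).rank := Matrix.rank_mul_le_right _ _
  have hrQ' : (Bd * B).rank = B.rank := by
    refine le_antisymm (Matrix.rank_mul_le_right Bd B) ?_
    calc B.rank = (B * (Bd * B)).rank := by rw [← Matrix.mul_assoc, hB1]
      _ ≤ (Bd * B).rank := Matrix.rank_mul_le_right _ _
  -- idempotency facts
  have hPidem : (A * Ad) * (A * Ad) = A * Ad := by rw [← Matrix.mul_assoc, hA1]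
  have hQidem : (B * Bd) * (B * Bd) = B * Bd := by rw [← Matrix.mul_assoc, hB1]
  have hP'idem : (Ad * A) * (Ad * A) = Ad * A := by rw [← Matrix.mul_assoc, hA2]
  have hQ'idem : (Bd * B) * (Bd * B) = Bd * B := by rw [← Matrix.mul_assoc, hB2]
  -- the decomposition
  have hdecomp : Ad - Bd = Bd * (B - A) * Ad - Bd * (1 - A * Ad) + (1 - Bd * B) * Ad := by
    simp only [Matrix.mul_sub, Matrix.sub_mul, Matrix.mul_one, Matrix.one_mul]
    rw [Matrix.mul_assoc Bd A Ad]
    abel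
  have tri : ‖Ad - Bd‖ ≤ ‖Bd * (B - A) * Ad‖ + ‖Bd * (1 - A * Ad)‖ + ‖(1 - Bd * B) * Ad‖ := by
    rw [hdecomp]
    calc ‖Bd * (B - A) * Ad - Bd * (1 - A * Ad) + (1 - Bd * B) * Ad‖
        ≤ ‖Bd * (B - A) * Ad - Bd * (1 - A * Ad)‖ + ‖(1 - Bd * B) * Ad‖ := norm_add_le _ _
      _ ≤ ‖Bd * (B - A) * Ad‖ + ‖Bd * (1 - A * Ad)‖ + ‖(1 - Bd * B) * Ad‖ := by
          have := norm_sub_le (Bd * (B - A) * Ad) (Bd * (1 - A * Ad))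
          linarith
  -- Term 1
  have hb1 : ‖Bd * (B - A) * Ad‖ ≤ ‖Bd‖ * ‖A - B‖ * ‖Ad‖ := by
    calc ‖Bd * (B - A) * Ad‖ ≤ ‖Bd * (B - A)‖ * ‖Ad‖ := Matrix.l2_opNorm_mul _ _
      _ ≤ (‖Bd‖ * ‖B - A‖) * ‖Ad‖ :=
          mul_le_mul_of_nonneg_right (Matrix.l2_opNorm_mul _ _) (norm_nonneg _)
      _ = ‖Bd‖ * ‖A - B‖ * ‖Ad‖ := by rw [norm_sub_rev]
  -- Term 2
  have hb2 : ‖Bd * (1 - A * Ad)‖ ≤ ‖Bd‖ * (‖A - B‖ * ‖Ad‖) := by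
    have hBdeq : Bd * (1 - A * Ad) = Bd * ((B * Bd) * (1 - A * Ad)) := by
      rw [← Matrix.mul_assoc, ← Matrix.mul_assoc, hB2]
    have hswap : ‖(B * Bd) * (1 - A * Ad)‖ ≤ ‖(1 - B * Bd) * (A * Ad)‖ := by
      have htr : ‖(B * Bd) * (1 - A * Ad)‖ = ‖(1 - A * Ad) * (B * Bd)‖ := by
        rw [← norm_transpose_l2 ((1 - A * Ad) * (B * Bd)), Matrix.transpose_mul,
          Matrix.transpose_sub, Matrix.transpose_one, hA3, hB3]
      rw [htr]
      exact proj_swap hA3 hPidem hB3 hQidem (by rw [hrP, hrQ, hrank])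
    have hfac : (1 - B * Bd) * (A * Ad) = ((1 - B * Bd) * (A - B)) * Ad := by
      have h0 : (1 - B * Bd) * B = 0 := by
        rw [Matrix.sub_mul, Matrix.one_mul, Matrix.mul_assoc, ← Matrix.mul_assoc, hB1, sub_self]
      rw [Matrix.mul_sub (1 - B * Bd) A B, h0, sub_zero, Matrix.mul_assoc]
    have hnorm2 : ‖(1 - B * Bd) * (A * Ad)‖ ≤ ‖A - B‖ * ‖Ad‖ := by
      rw [hfac]
      calc ‖((1 - B * Bd) * (A - B)) * Ad‖ ≤ ‖(1 - B * Bd) * (A - B)‖ * ‖Ad‖ :=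
            Matrix.l2_opNorm_mul _ _
        _ ≤ (‖(1 - B * Bd)‖ * ‖A - B‖) * ‖Ad‖ :=
            mul_le_mul_of_nonneg_right (Matrix.l2_opNorm_mul _ _) (norm_nonneg _)
        _ ≤ (1 * ‖A - B‖) * ‖Ad‖ :=
            mul_le_mul_of_nonneg_right
              (mul_le_mul_of_nonneg_right
                (proj_norm_le_one (one_sub_sym hB3) (one_sub_idem hQidem)) (norm_nonneg _))
              (norm_nonneg _)
        _ = ‖A - B‖ * ‖Ad‖ := by rw [one_mul]
    calc ‖Bd * (1 - A * Ad)‖ = ‖Bd * ((B * Bd) * (1 - A * Ad))‖ := by rw [← hBdeq]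
      _ ≤ ‖Bd‖ * ‖(B * Bd) * (1 - A * Ad)‖ := Matrix.l2_opNorm_mul _ _
      _ ≤ ‖Bd‖ * (‖A - B‖ * ‖Ad‖) :=
          mul_le_mul_of_nonneg_left (le_trans hswap hnorm2) (norm_nonneg _)
  -- Term 3
  have hb3 : ‖(1 - Bd * B) * Ad‖ ≤ (‖A - B‖ * ‖Bd‖) * ‖Ad‖ := by
    have hAdeq : (1 - Bd * B) * Ad = ((1 - Bd * B) * (Ad * A)) * Ad := by
      rw [Matrix.mul_assoc, Matrix.mul_assoc, ← Matrix.mul_assoc Ad A Ad, hA2]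
    have hswap : ‖(1 - Bd * B) * (Ad * A)‖ ≤ ‖(1 - Ad * A) * (Bd * B)‖ :=
      proj_swap hB4 hQ'idem hA4 hP'idem (by rw [hrP', hrQ', hrank])
    have hfac : (1 - Ad * A) * (Bd * B) = ((1 - Ad * A) * (B - A)ᵀ) * Bdᵀ := by
      have h1 : (Ad * A) * Aᵀ = Aᵀ := by
        rw [← hA4, ← Matrix.transpose_mul, ← Matrix.mul_assoc, hA1]
      have h0 : (1 - Ad * A) * Aᵀ = 0 := by
        rw [Matrix.sub_mul, Matrix.one_mul, h1, sub_self]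
      symm
      rw [Matrix.transpose_sub, Matrix.mul_sub, h0, sub_zero, Matrix.mul_assoc,
        ← Matrix.transpose_mul, hB4]
    have hnorm3 : ‖(1 - Ad * A) * (Bd * B)‖ ≤ ‖A - B‖ * ‖Bd‖ := by
      rw [hfac]
      calc ‖((1 - Ad * A) * (B - A)ᵀ) * Bdᵀ‖ ≤ ‖(1 - Ad * A) * (B - A)ᵀ‖ * ‖Bdᵀ‖ :=
            Matrix.l2_opNorm_mul _ _
        _ ≤ (‖(1 - Ad * A)‖ * ‖(B - A)ᵀ‖) * ‖Bdᵀ‖ :=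
            mul_le_mul_of_nonneg_right (Matrix.l2_opNorm_mul _ _) (norm_nonneg _)
        _ ≤ (1 * ‖(B - A)ᵀ‖) * ‖Bdᵀ‖ :=
            mul_le_mul_of_nonneg_right
              (mul_le_mul_of_nonneg_right
                (proj_norm_le_one (one_sub_sym hA4) (one_sub_idem hP'idem)) (norm_nonneg _))
              (norm_nonneg _)
        _ = ‖A - B‖ * ‖Bd‖ := by
            rw [one_mul, norm_transpose_l2, norm_transpose_l2, norm_sub_rev]
    calc ‖(1 - Bd * B) * Ad‖ = ‖((1 - Bd * B) * (Ad * A)) * Ad‖ := by rw [← hAdeq]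
      _ ≤ ‖(1 - Bd * B) * (Ad * A)‖ * ‖Ad‖ := Matrix.l2_opNorm_mul _ _
      _ ≤ (‖A - B‖ * ‖Bd‖) * ‖Ad‖ :=
          mul_le_mul_of_nonneg_right (le_trans hswap hnorm3) (norm_nonneg _)
  -- combine
  have hAdn := norm_nonneg Ad
  have hBdn := norm_nonneg Bd
  have hABn := norm_nonneg (A - B)
  nlinarith [tri, hb1, hb2, hb3]
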